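/- Let 0 < λ₁ < λ₂ < 1 and set w = λ₁λ₂, x = λ₁(1−λ₂), y = (1−λ₁)λ₂, z = (1−λ₁)(1−λ₂). Suppose V : {1,2,...} × {0,1,2,...} → ℝ is nonnegative, the family (V_{i,j}) is summable with total sum 1, the family (i·V_{i,j}) is summable, and, writing Q_j = Σ_{i≥1} V_{i,j}, the stationary balance equations hold: V_{1,j} = w·Q_j + y·Q_{j+1} for all j ≥ 0; V_{i+1,0} = (1−λ₁)·V_{i,0} for all i ≥ 1; and V_{i+1,j} = x·V_{i,j−1} + z·V_{i,j} for all i ≥ 1 and j ≥ 1. Then Σ_{i≥1} Σ_{j≥0} i·V_{i,j} = 1/λ₁. -/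

import Mathlib

open scoped BigOperators

/-- Theorem 1(i): the average Age of Actuation of the Geo/Geo/1 queue with a
controller is `1/λ₁`.  Here `V i j` denotes the stationary probability of the
state `(A, Q) = (i+1, j)` (the first index is shifted so that age `i+1`
corresponds to index `i`). -/
theorem avg_AoA_geo_geo_1_controller
    (l1 l2 : ℝ) (hl1 : 0 < l1) (hl12 : l1 < l2) (hl2 : l2 < 1)
    (V : ℕ → ℕ → ℝ)
    (hnn : ∀ i j, 0 ≤ V i j)
    (hsum : Summable fun p : ℕ × ℕ => V p.1 p.2)
    (htot : ∑' p : ℕ × ℕ, V p.1 p.2 = 1)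
    (hwsum : Summable fun p : ℕ × ℕ => ((p.1 : ℝ) + 1) * V p.1 p.2)
    (hbal1 : ∀ j : ℕ,
      V 0 j = (l1 * l2) * (∑' i : ℕ, V i j) + ((1 - l1) * l2) * (∑' i : ℕ, V i (j + 1)))
    (hbal0 : ∀ i : ℕ, V (i + 1) 0 = (1 - l1) * V i 0)
    (hbal : ∀ i j : ℕ,
      V (i + 1) (j + 1) = (l1 * (1 - l2)) * V i j + ((1 - l1) * (1 - l2)) * V i (j + 1)) :
    ∑' p : ℕ × ℕ, ((p.1 : ℝ) + 1) * V p.1 p.2 = 1 / l1 := by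
  have hl1' : l1 < 1 := hl12.trans hl2
  have hl2' : 0 < l2 := hl1.trans hl12
  set x := l1 * (1 - l2) with hx_def
  set y := (1 - l1) * l2 with hy_def
  set z := (1 - l1) * (1 - l2) with hz_def
  have hy : 0 < y := mul_pos (by linarith) hl2'
  have hxpos : 0 < x := mul_pos hl1 (by linarith)
  have hxy : x < y := by rw [hx_def, hy_def]; nlinarith
  set r := x / y with hr_def
  have hr0 : 0 ≤ r := le_of_lt (div_pos hxpos hy)
  have hr1 : r < 1 := (div_lt_one hy).2 hxy
  have hyr : y * r = x := by rw [hr_def, mul_div_assoc']; exact mul_div_cancel_left₀ x (ne_of_gt hy)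
  -- summability of columns and rows
  have hcol : ∀ j, Summable fun i => V i j := fun j => hsum.prod_symm.prod_factor j
  have hrow : ∀ i, Summable fun j => V i j := fun i => hsum.prod_factor i
  set Q : ℕ → ℝ := fun j => ∑' i, V i j with hQ_def
  set R : ℕ → ℝ := fun i => ∑' j, V i j with hR_def
  have hRtot : ∑' i, R i = 1 := by rw [← htot, Summable.tsum_prod hsum]
  have hQtot : ∑' j, Q j = 1 := by
    rw [← hRtot, hR_def, hQ_def]
    exact Summable.tsum_comm hsum
  -- geometric first column
  have ha : ∀ i, V i 0 = (1 - l1) ^ i * V 0 0 := by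
    intro i
    induction i with
    | zero => simp
    | succ n ih => rw [hbal0, ih, pow_succ]; ring
  -- V 0 0 = l1 * Q 0
  have hQ0V : l1 * Q 0 = V 0 0 := by
    have h1 : Q 0 = V 0 0 + ∑' i, V (i + 1) 0 := Summable.tsum_eq_zero_add (hcol 0)
    have h2 : ∑' i, V (i + 1) 0 = (1 - l1) * Q 0 := by
      rw [tsum_congr hbal0, tsum_mul_left]
    rw [h2] at h1
    linarith
  -- Q 1 = r * Q 0
  have hQ1 : Q 1 = r * Q 0 := by
    have h3 := hbal1 0
    have hQ00 : (∑' i, V i 0) = Q 0 := rfl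
    have hQ11 : (∑' i, V i 1) = Q 1 := rfl
    rw [hQ00, hQ11] at h3
    have h4 : y * Q 1 = x * Q 0 := by
      linear_combination -h3 - hQ0V - Q 0 * hx_def
    have hyne : y ≠ 0 := ne_of_gt hy
    rw [hr_def, div_mul_eq_mul_div, eq_div_iff hyne]
    linear_combination h4
  -- recurrence for Q
  have hQrec : ∀ j, (x + y) * Q (j + 1) = x * Q j + y * Q (j + 2) := by
    intro j
    have h1 : Q (j + 1) = V 0 (j + 1) + ∑' i, V (i + 1) (j + 1) :=
      Summable.tsum_eq_zero_add (hcol (j + 1))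
    have h2 : ∑' i, V (i + 1) (j + 1) = x * Q j + z * Q (j + 1) := by
      rw [tsum_congr (fun i => hbal i j),
        Summable.tsum_add ((hcol j).mul_left x) ((hcol (j + 1)).mul_left z),
        tsum_mul_left, tsum_mul_left]
    have h3 := hbal1 (j + 1)
    have hQj1 : (∑' i, V i (j + 1)) = Q (j + 1) := rfl
    have hQj2 : (∑' i, V i (j + 1 + 1)) = Q (j + 2) := rfl
    rw [hQj1, hQj2] at h3
    rw [h2] at h1
    have hid : l1 * l2 + z = 1 - (x + y) := by
      rw [hx_def, hy_def, hz_def]; ring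
    linear_combination h1 + h3 + Q (j + 1) * hid
  -- Q is geometric
  have hQgeo : ∀ j, Q j = r ^ j * Q 0 := by
    have key : ∀ j, Q j = r ^ j * Q 0 ∧ Q (j + 1) = r ^ (j + 1) * Q 0 := by
      intro j
      induction j with
      | zero => exact ⟨by simp, by simpa using hQ1⟩
      | succ n ih =>
        refine ⟨ih.2, ?_⟩
        have h := hQrec n
        rw [ih.1, ih.2] at h
        have hyne : y ≠ 0 := ne_of_gt hy
        have h2 : y * Q (n + 2) = y * (r ^ (n + 2) * Q 0) := by
          linear_combination (-1 : ℝ) * h + r ^ n * Q 0 * (1 - r) * hyr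
        exact mul_left_cancel₀ hyne h2
    exact fun j => (key j).1
  -- Q 0 = 1 - r
  have h1r : (1 : ℝ) - r ≠ 0 := by intro hc; rw [sub_eq_zero] at hc; exact absurd hc.symm (ne_of_lt hr1)
  have hQ0 : Q 0 = 1 - r := by
    have h1 : ∑' j, Q j = (1 - r)⁻¹ * Q 0 := by
      rw [tsum_congr hQgeo, tsum_mul_right, tsum_geometric_of_lt_one hr0 hr1]
    rw [hQtot] at h1
    calc Q 0 = (1 - r) * ((1 - r)⁻¹ * Q 0) := by
          rw [← mul_assoc, mul_inv_cancel₀ h1r, one_mul]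
      _ = (1 - r) * 1 := by rw [← h1]
      _ = 1 - r := mul_one _
  -- row recurrence
  have hRrec : ∀ i, R (i + 1) = (1 - l2) * R i + y * V i 0 := by
    intro i
    have h1 : R (i + 1) = V (i + 1) 0 + ∑' j, V (i + 1) (j + 1) :=
      Summable.tsum_eq_zero_add (hrow (i + 1))
    have hshift : Summable fun j => V i (j + 1) := by
      have := (summable_nat_add_iff (f := fun j => V i j) 1).2 (hrow i)
      exact this.congr fun j => by simp [Nat.add_comm]
    have h2 : ∑' j, V (i + 1) (j + 1) = x * R i + z * ∑' j, V i (j + 1) := by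
      rw [tsum_congr (fun j => hbal i j),
        Summable.tsum_add ((hrow i).mul_left x) (hshift.mul_left z),
        tsum_mul_left, tsum_mul_left]
    have h3 : R i = V i 0 + ∑' j, V i (j + 1) := Summable.tsum_eq_zero_add (hrow i)
    have hid1 : x + z = 1 - l2 := by rw [hx_def, hz_def]; ring
    have hid2 : 1 - l1 - z = y := by rw [hy_def, hz_def]; ring
    rw [hbal0 i, h2] at h1
    linear_combination h1 - z * h3 + V i 0 * hid2 + R i * hid1
  -- the weighted sum S
  have hSR : Summable fun i : ℕ => ((i : ℝ) + 1) * R i := by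
    refine hwsum.prod.congr fun i => ?_
    exact (tsum_mul_left : (∑' c : ℕ, ((i : ℝ) + 1) * V i c) = ((i : ℝ) + 1) * ∑' c : ℕ, V i c)
  set S := ∑' p : ℕ × ℕ, ((p.1 : ℝ) + 1) * V p.1 p.2 with hS_def
  have hSeq : S = ∑' i : ℕ, ((i : ℝ) + 1) * R i := by
    rw [hS_def, Summable.tsum_prod hwsum]
    refine tsum_congr fun i => ?_
    exact (tsum_mul_left : (∑' c : ℕ, ((i : ℝ) + 1) * V i c) = ((i : ℝ) + 1) * ∑' c : ℕ, V i c)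
  -- first-column weighted sum
  have hVcol : Summable fun i : ℕ => ((i : ℝ) + 1) * V i 0 :=
    hwsum.prod_symm.prod_factor 0
  have hgeo2 : HasSum (fun n : ℕ => ((n : ℝ) + 1) * (1 - l1) ^ n) (1 / l1 ^ 2) := by
    have h := hasSum_choose_mul_geometric_of_norm_lt_one (𝕜 := ℝ) 1 (r := 1 - l1)
      (by rw [Real.norm_eq_abs, abs_lt]; constructor <;> linarith)
    have e : (1 : ℝ) / (1 - (1 - l1)) ^ (1 + 1) = 1 / l1 ^ 2 := by norm_num
    rw [e] at h
    refine h.congr_fun fun n => ?_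
    simp [Nat.choose_one_right]
  have hT : ∑' i : ℕ, ((i : ℝ) + 1) * V i 0 = V 0 0 / l1 ^ 2 := by
    have h1 : ∀ i : ℕ, ((i : ℝ) + 1) * V i 0 = (((i : ℝ) + 1) * (1 - l1) ^ i) * V 0 0 := by
      intro i; rw [ha i]; ring
    rw [tsum_congr h1, tsum_mul_right, hgeo2.tsum_eq]
    ring
  -- shifted sum identity
  have hRsum : Summable R := hsum.prod
  have hiR : Summable fun i : ℕ => (i : ℝ) * R i := by
    have h : Summable fun i : ℕ => (((i : ℝ) + 1) * R i - R i) := hSR.sub hRsum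
    refine h.congr fun i => by ring
  have hmain : ∑' i : ℕ, (i : ℝ) * R i = ∑' i : ℕ, ((i : ℝ) + 1) * R (i + 1) := by
    have h := Summable.tsum_eq_zero_add hiR
    rw [h]
    push_cast
    simp
  have hMsub : ∑' i : ℕ, (i : ℝ) * R i = S - 1 := by
    have h : ∑' i : ℕ, (((i : ℝ) + 1) * R i - R i) = S - 1 := by
      rw [Summable.tsum_sub hSR hRsum, ← hSeq, hRtot]
    rw [← h]
    exact tsum_congr fun i => by ring
  have hRHS : ∑' i : ℕ, ((i : ℝ) + 1) * R (i + 1)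
      = (1 - l2) * S + y * (V 0 0 / l1 ^ 2) := by
    have h1 : ∀ i : ℕ, ((i : ℝ) + 1) * R (i + 1)
        = (1 - l2) * (((i : ℝ) + 1) * R i) + y * (((i : ℝ) + 1) * V i 0) := by
      intro i; rw [hRrec i]; ring
    rw [tsum_congr h1, Summable.tsum_add (hSR.mul_left _) (hVcol.mul_left _),
      tsum_mul_left, tsum_mul_left, ← hSeq, hT]
  -- final computation
  have hV00 : V 0 0 = l1 * (1 - r) := by rw [← hQ0V, hQ0]
  have hy1r : y * (1 - r) = l2 - l1 := by
    have hyx : y - x = l2 - l1 := by rw [hx_def, hy_def]; ring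
    linear_combination -hyr + hyx
  have hl1ne : l1 ≠ 0 := ne_of_gt hl1
  have hl2ne : l2 ≠ 0 := ne_of_gt hl2'
  have e : y * (V 0 0 / l1 ^ 2) = (l2 - l1) / l1 := by
    have estep : y * (l1 * (1 - r) / l1 ^ 2) = y * (1 - r) / l1 := by
      field_simp
    rw [hV00, estep, hy1r]
  have hfin : S - 1 = (1 - l2) * S + (l2 - l1) / l1 := by
    rw [← hMsub, hmain, hRHS, e]
  have h7 : l1 * l2 * S = l2 := by
    have h6 : l1 * (S - 1) = l1 * ((1 - l2) * S) + l1 * ((l2 - l1) / l1) := by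
      rw [hfin]; ring
    rw [mul_div_cancel₀ _ hl1ne] at h6
    linear_combination h6
  rw [eq_div_iff hl1ne]
  have h8 : (S * l1) * l2 = 1 * l2 := by linear_combination h7
  exact mul_right_cancel₀ hl2ne h8
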